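/- Suppose bar_u, bar_v : ℝ → ℝⁿ are differentiable and satisfy d/dt bar_v = -β J(t), d/dt bar_u = (γ/|Ω|) J(t) for some continuous J and constants β, γ, |Ω| > 0. Then X₂ = (1/2)|bar_v|² + (β|Ω|/(2γ))|bar_u|² - (β|Ω|/(2(γ + β|Ω|)))|bar_u - bar_v|² is conserved: d/dt X₂ = 0. -/

import Mathlib

open MeasureTheory

lemma norm_sq_deriv {n : ℕ} (f : ℝ → EuclideanSpace ℝ (Fin n))
    (f' : EuclideanSpace ℝ (Fin n)) (t : ℝ) (hf : HasDerivAt f f' t) :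
    HasDerivAt (fun t => ‖f t‖ ^ 2) (2 * inner ℝ f' (f t)) t := by
  have h := (hf.inner ℝ hf)
  have : (fun t => ‖f t‖ ^ 2) = fun t => inner ℝ (f t) (f t) := by
    funext s; rw [real_inner_self_eq_norm_sq]
  rw [this]
  refine h.congr_deriv ?_
  rw [real_inner_comm (f t) f']
  ring

/-- conservation of
`X₂ = (1/2)|bar_v|² + (β|Ω|/(2γ))|bar_u|² - (β|Ω|/(2(γ+β|Ω|)))|bar_u - bar_v|²`
under the drag exchange ODEs `bar_v' = -β J`, `bar_u' = (γ/|Ω|) J`. -/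
theorem X2_conserved
    (n : ℕ) (β γ volΩ : ℝ) (hβ : 0 < β) (hγ : 0 < γ) (hvol : 0 < volΩ)
    (bar_u bar_v J : ℝ → EuclideanSpace ℝ (Fin n))
    (hJ : Continuous J)
    (hv : ∀ t, HasDerivAt bar_v (-(β • J t)) t)
    (hu : ∀ t, HasDerivAt bar_u ((γ / volΩ) • J t) t) :
    ∀ t, HasDerivAt (fun t =>
        (1 / 2) * ‖bar_v t‖ ^ 2
          + (β * volΩ / (2 * γ)) * ‖bar_u t‖ ^ 2
          - (β * volΩ / (2 * (γ + β * volΩ))) * ‖bar_u t - bar_v t‖ ^ 2)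
      0 t := by
  intro t
  have h1 := norm_sq_deriv bar_v _ t (hv t)
  have h2 := norm_sq_deriv bar_u _ t (hu t)
  have h3 := norm_sq_deriv (fun t => bar_u t - bar_v t)
      ((γ / volΩ) • J t - (-(β • J t))) t ((hu t).sub (hv t))
  have h := ((h1.const_mul (1 / 2)).add (h2.const_mul (β * volΩ / (2 * γ)))).sub
      (h3.const_mul (β * volΩ / (2 * (γ + β * volΩ))))
  refine h.congr_deriv ?_
  simp only [inner_smul_left, inner_neg_left, inner_sub_left, inner_sub_right,
    RCLike.conj_to_real, inner_neg_right, map_div₀, conj_trivial]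
  field_simp
  ring
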